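/- Let D ⊆ ℂ be a disc around 0 and E ⊆ ℂ a disc around 0. Let χ⁰, χ¹ : D × E → ℂ be functions such that, for each h ∈ D, ε ↦ χ⁰(h,ε) is differentiable at ε = 0 with derivative ∂_εχ⁰(h,0), ε ↦ χ¹(h,ε) is continuous at ε = 0, and χ⁰(h,0) = λ₀ for all h ∈ D, where λ₀ ∈ ℂ, λ₀ ≠ 0. Fix ε₀ ∈ E∖{0}, set κ = exp(2πi·λ₀/ε₀), and for n ∈ ℕ define ε_n = λ₀ / (λ₀/ε₀ + n) (well-defined and nonzero for all large n, with ε_n → 0). Then for each h ∈ D: (i) exp(±2πi·λ₀/ε_n) = κ^{±1} for every n; (ii) lim_{n→∞} exp(−2πi·χ⁰(h,ε_n)/ε_n) = κ⁻¹·exp(−2πi·∂_εχ⁰(h,0)); and (iii) lim_{n→∞} exp(2πi·[χ⁰(h,ε_n)/ε_n + χ¹(h,ε_n)]) = κ·exp(2πi·[∂_εχ⁰(h,0) + χ¹(h,0)]). -/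

import Mathlib

open Metric Complex Filter

/-- **Accumulation of the formal monodromy: the analytic core.**
Assume `χ⁰(h,0) ≡ lam0 ≠ 0`, `ε ↦ χ⁰(h,ε)` is differentiable at `0` and `ε ↦ χ¹(h,ε)`
continuous at `0`, for `h` in a disc `D`.  Along the sequence `ε_n = lam0/(lam0/ε₀ + n)`
the factor `e^{±2πilam0/ε_n}` stays equal to `κ^{±1} = e^{±2πilam0/ε₀}`, and the formal
monodromy multipliers converge:
`e^{−2πiχ⁰(h,ε_n)/ε_n} → κ⁻¹e^{−2πi∂_εχ⁰(h,0)}` and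
`e^{2πi[χ⁰(h,ε_n)/ε_n + χ¹(h,ε_n)]} → κ·e^{2πi[∂_εχ⁰(h,0) + χ¹(h,0)]}`. -/
theorem formal_monodromy_accumulation
    (rD rE : ℝ) (χ0 χ1 : ℂ → ℂ → ℂ) (dχ0 : ℂ → ℂ) (lam0 : ℂ) (hlam0 : lam0 ≠ 0)
    (hd : ∀ h ∈ ball (0 : ℂ) rD, HasDerivAt (fun e => χ0 h e) (dχ0 h) 0)
    (hc : ∀ h ∈ ball (0 : ℂ) rD, ContinuousAt (fun e => χ1 h e) 0)
    (h0 : ∀ h ∈ ball (0 : ℂ) rD, χ0 h 0 = lam0)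
    (ε₀ : ℂ) (hε₀E : ε₀ ∈ ball (0 : ℂ) rE) (hε₀ : ε₀ ≠ 0)
    (κ : ℂ) (hκ : κ = exp (2 * Real.pi * I * lam0 / ε₀))
    (εseq : ℕ → ℂ) (hεseq : ∀ n : ℕ, εseq n = lam0 / (lam0 / ε₀ + n)) :
    ∀ h ∈ ball (0 : ℂ) rD,
      (∀ n : ℕ, lam0 / ε₀ + n ≠ 0 →
        exp (2 * Real.pi * I * lam0 / εseq n) = κ ∧
        exp (-(2 * Real.pi * I * lam0 / εseq n)) = κ⁻¹) ∧
      Tendsto (fun n : ℕ => exp (-(2 * Real.pi * I * χ0 h (εseq n) / εseq n)))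
        atTop (nhds (κ⁻¹ * exp (-(2 * Real.pi * I * dχ0 h)))) ∧
      Tendsto (fun n : ℕ =>
          exp (2 * Real.pi * I * (χ0 h (εseq n) / εseq n + χ1 h (εseq n))))
        atTop (nhds (κ * exp (2 * Real.pi * I * (dχ0 h + χ1 h 0)))) := by
  intro h hD
  set c : ℂ := lam0 / ε₀ with hc_def
  have hεne : ∀ n : ℕ, c + n ≠ 0 → εseq n ≠ 0 := fun n hn => by
    rw [hεseq]; exact div_ne_zero hlam0 hn
  have hlamdiv : ∀ n : ℕ, c + n ≠ 0 → lam0 / εseq n = c + n := fun n hn => by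
    rw [hεseq]
    field_simp
  have part1 : ∀ n : ℕ, c + n ≠ 0 →
      exp (2 * Real.pi * I * lam0 / εseq n) = κ ∧
      exp (-(2 * Real.pi * I * lam0 / εseq n)) = κ⁻¹ := by
    intro n hn
    have key : exp (2 * Real.pi * I * lam0 / εseq n) = κ := by
      have e1 : (2 * Real.pi * I * lam0 / εseq n : ℂ)
          = 2 * Real.pi * I * lam0 / ε₀ + (n : ℂ) * (2 * Real.pi * I) := by
        rw [mul_div_assoc, hlamdiv n hn, mul_div_assoc]
        ring
      rw [e1, Complex.exp_add, hκ]
      simp [Complex.exp_nat_mul_two_pi_mul_I]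
    exact ⟨key, by rw [← key, ← Complex.exp_neg]⟩
  -- eventually nonzero denominators
  have hNne : ∀ᶠ n : ℕ in atTop, c + (n : ℂ) ≠ 0 := by
    have hev : ∀ᶠ n : ℕ in atTop, (‖c‖ : ℝ) < n :=
      (tendsto_natCast_atTop_atTop (R := ℝ)).eventually_gt_atTop ‖c‖
    filter_upwards [hev] with n hn hzero
    have hc' : c = -(n : ℂ) := by linear_combination hzero
    rw [hc'] at hn
    simp at hn
  -- norms of denominators tend to infinity
  have hnorm : Tendsto (fun n : ℕ => ‖c + (n : ℂ)‖) atTop atTop := by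
    refine tendsto_atTop_mono (f := fun n : ℕ => (n : ℝ) - ‖c‖) (fun n => ?_) ?_
    · have hle : (n : ℝ) ≤ ‖c + (n : ℂ)‖ + ‖c‖ := by
        calc (n : ℝ) = ‖(n : ℂ)‖ := by simp
          _ = ‖(c + (n : ℂ)) - c‖ := by ring_nf
          _ ≤ ‖c + (n : ℂ)‖ + ‖c‖ := norm_sub_le _ _
      linarith
    · exact tendsto_atTop_add_const_right _ _ tendsto_natCast_atTop_atTop
  -- εseq tends to 0
  have hεtend0 : Tendsto εseq atTop (nhds 0) := by
    have hinv : Tendsto (fun n : ℕ => (c + (n : ℂ))⁻¹) atTop (nhds 0) := by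
      rw [tendsto_zero_iff_norm_tendsto_zero]
      simpa [Function.comp_def] using tendsto_inv_atTop_zero.comp hnorm
    have := hinv.const_mul lam0
    rw [mul_zero] at this
    refine this.congr fun n => ?_
    rw [hεseq, div_eq_mul_inv]
  have hεtend : Tendsto εseq atTop (nhdsWithin 0 {x : ℂ | x ≠ 0}) := by
    rw [tendsto_nhdsWithin_iff]
    exact ⟨hεtend0, hNne.mono fun n hn => hεne n hn⟩
  -- slope convergence
  have hslope : Tendsto (fun e : ℂ => (χ0 h e - lam0) / e) (nhdsWithin 0 {x : ℂ | x ≠ 0})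
      (nhds (dχ0 h)) := by
    have H := hasDerivAt_iff_tendsto_slope.mp (hd h hD)
    refine H.congr fun e => ?_
    simp [slope, h0 h hD, div_eq_inv_mul]
  have hsl : Tendsto (fun n : ℕ => (χ0 h (εseq n) - lam0) / εseq n) atTop (nhds (dχ0 h)) :=
    hslope.comp hεtend
  have hχ1 : Tendsto (fun n : ℕ => χ1 h (εseq n)) atTop (nhds (χ1 h 0)) :=
    (hc h hD).tendsto.comp hεtend0
  refine ⟨part1, ?_, ?_⟩
  · -- second part
    have lim2 : Tendsto
        (fun n : ℕ => κ⁻¹ * exp (-(2 * Real.pi * I * ((χ0 h (εseq n) - lam0) / εseq n))))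
        atTop (nhds (κ⁻¹ * exp (-(2 * Real.pi * I * dχ0 h)))) :=
      Tendsto.const_mul κ⁻¹ (((hsl.const_mul (2 * Real.pi * I)).neg).cexp)
    refine Tendsto.congr' ?_ lim2
    filter_upwards [hNne] with n hn
    have hne := hεne n hn
    have hsplit : -(2 * Real.pi * I * χ0 h (εseq n) / εseq n)
        = -(2 * Real.pi * I * ((χ0 h (εseq n) - lam0) / εseq n))
          + -(2 * Real.pi * I * lam0 / εseq n) := by
      field_simp
      ring
    rw [hsplit, Complex.exp_add, (part1 n hn).2, mul_comm]
  · -- third part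
    have lim3 : Tendsto
        (fun n : ℕ => κ * exp (2 * Real.pi * I *
            ((χ0 h (εseq n) - lam0) / εseq n + χ1 h (εseq n))))
        atTop (nhds (κ * exp (2 * Real.pi * I * (dχ0 h + χ1 h 0)))) :=
      Tendsto.const_mul κ (((hsl.add hχ1).const_mul (2 * Real.pi * I)).cexp)
    refine Tendsto.congr' ?_ lim3
    filter_upwards [hNne] with n hn
    have hne := hεne n hn
    have hsplit : 2 * Real.pi * I * (χ0 h (εseq n) / εseq n + χ1 h (εseq n))
        = 2 * Real.pi * I * ((χ0 h (εseq n) - lam0) / εseq n + χ1 h (εseq n))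
          + 2 * Real.pi * I * lam0 / εseq n := by
      field_simp
      ring
    rw [hsplit, Complex.exp_add, (part1 n hn).1, mul_comm]
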